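/- Let m and n be positive integers and let A be a nonzero AW*-algebra of type I_m. If 1 = e₁ + ⋯ + e_n for pairwise orthogonal, pairwise equivalent projections e₁, …, e_n in A, then n divides m. -/

import Mathlib

universe u

section Defs

variable {R : Type u} [Ring R] [StarRing R]

/-- An element is a projection if it is self-adjoint and idempotent. -/
def IsProjection (p : R) : Prop := star p = p ∧ p * p = p

/-- Order on projections: `e ≤ f` iff `e = ef`. -/
def ProjLE (e f : R) : Prop := e * f = e

/-- Murray–von Neumann equivalence of projections. -/
def ProjEquiv (e f : R) : Prop := ∃ v : R, star v * v = e ∧ v * star v = f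

/-- `e ≼ f` : `e` is equivalent to a subprojection of `f`. -/
def ProjSubEquiv (e f : R) : Prop :=
  ∃ e' : R, IsProjection e' ∧ ProjLE e' f ∧ ProjEquiv e e'

/-- `e ≺ f` : `e ≼ f` but `e` is not equivalent to `f` (with the convention `0 ≺ 0`). -/
def ProjLT (e f : R) : Prop :=
  (ProjSubEquiv e f ∧ ¬ ProjEquiv e f) ∨ (e = 0 ∧ f = 0)

/-- A central projection. -/
def IsCentralProj (z : R) : Prop := IsProjection z ∧ ∀ a : R, z * a = a * z

/-- `c` is the central cover of `e`: the least central projection above `e`. -/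
def IsCentralCover (e c : R) : Prop :=
  IsCentralProj c ∧ ProjLE e c ∧
    ∀ z : R, IsCentralProj z → ProjLE e z → ProjLE c z

/-- A projection `e` is finite if `e ∼ f ≤ e` implies `f = e`. -/
def ProjFinite (e : R) : Prop :=
  ∀ f : R, IsProjection f → ProjEquiv e f → ProjLE f e → f = e

/-- A nonzero projection is properly infinite if `ze` is infinite
for every central projection `z` with `ze ≠ 0`. -/
def ProperlyInfinite (e : R) : Prop :=
  IsProjection e ∧ e ≠ 0 ∧
    ∀ z : R, IsCentralProj z → z * e ≠ 0 → ¬ ProjFinite (z * e)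

/-- A pairwise orthogonal family of elements. -/
def PairwiseOrthogonal {ι : Type*} (p : ι → R) : Prop :=
  ∀ i j, i ≠ j → p i * p j = 0

/-- `s` is the supremum of the family `p` in the projection order. For an
orthogonal family, this is the sum `Σ pᵢ`. -/
def IsSupProj {ι : Type*} (p : ι → R) (s : R) : Prop :=
  IsProjection s ∧ (∀ i, ProjLE (p i) s) ∧
    ∀ t : R, IsProjection t → (∀ i, ProjLE (p i) t) → ProjLE s t

/-- The family `p` belongs to `Γ(e)`: an orthogonal family of projections,
each equivalent to `e`, with sum (supremum) `e`. -/
def InGamma (e : R) {ι : Type u} (p : ι → R) : Prop :=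
  (∀ i, IsProjection (p i)) ∧ PairwiseOrthogonal p ∧
    (∀ i, ProjEquiv (p i) e) ∧ IsSupProj p e

open Classical in
/-- The dimension `d(e)` of a properly infinite projection: the least cardinal
strictly greater than the cardinality of the index set of every family in
`Γ(e)`, with the convention `d(0) = 0`. -/
noncomputable def projDim (e : R) : Cardinal.{u} :=
  if e = 0 then 0
  else sSup {c : Cardinal.{u} |
    ∃ (ι : Type u) (p : ι → R), InGamma e p ∧ c = Order.succ (Cardinal.mk ι)}

/-- A properly infinite projection `e` is equidimensional if `d(ze) = d(e)`
for every central projection `z` with `ze ≠ 0` (equivalently, for every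
nonzero central projection `z ≤ c(e)`). -/
def Equidimensional (e : R) : Prop :=
  ProperlyInfinite e ∧
    ∀ z : R, IsCentralProj z → z * e ≠ 0 → projDim (z * e) = projDim e

/-- An abelian projection: the corner `eRe` is commutative. -/
def IsAbelianProj (e : R) : Prop :=
  IsProjection e ∧ ∀ a b : R, (e * a * e) * (e * b * e) = (e * b * e) * (e * a * e)

/-- `j` is the join `e ∨ f` in the projection lattice. -/
def IsJoinProj (e f j : R) : Prop :=
  IsProjection j ∧ ProjLE e j ∧ ProjLE f j ∧
    ∀ t : R, IsProjection t → ProjLE e t → ProjLE f t → ProjLE j t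

end Defs

/-- The AW*-condition: the right annihilator of any subset is generated by a
projection: `{a | ∀ s ∈ S, s a = 0} = pR`. -/
def IsAWStarRing (R : Type*) [Ring R] [StarRing R] : Prop :=
  ∀ S : Set R, ∃ p : R, IsProjection p ∧
    {a : R | ∀ s ∈ S, s * a = 0} = {a : R | ∃ b : R, a = p * b}

/-- A maximal abelian (*-sub)algebra. -/
def IsMaximalAbelian {A : Type*} [Ring A] [StarRing A] [Algebra ℂ A] [StarModule ℂ A]
    (M : StarSubalgebra ℂ A) : Prop :=
  (∀ x ∈ M, ∀ y ∈ M, x * y = y * x) ∧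
    ∀ N : StarSubalgebra ℂ A, (∀ x ∈ N, ∀ y ∈ N, x * y = y * x) → M ≤ N → M = N


lemma aux_pisom {A : Type*} [NormedRing A] [StarRing A] [CStarRing A]
    (v e : A) (hse : star e = e) (hvv : star v * v = e) (hee : e * e = e) :
    v * e = v := by
  have h0 : star (v * e - v) * (v * e - v) = 0 := by
    have h1 : star (v * e - v) * (v * e - v)
        = e * (star v * v) * e - e * (star v * v) - (star v * v) * e + star v * v := by
      simp only [star_sub, star_mul, hse]
      noncomm_ring
    rw [h1, hvv]
    simp only [hee]
    abel
  exact sub_eq_zero.mp ((CStarRing.star_mul_self_eq_zero_iff _).mp h0)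

lemma corner_mul_left {A : Type u} [Ring A] {f x : A} (hff : f * f = f)
    (hx : f * x * f = x) : f * x = x := by
  have h : f * (f * x * f) = f * x * f := by
    simp only [← mul_assoc]
    rw [hff]
  rw [hx] at h
  exact h

lemma corner_mul_right {A : Type u} [Ring A] {f x : A} (hff : f * f = f)
    (hx : f * x * f = x) : x * f = x := by
  have h : (f * x * f) * f = f * x * f := by
    rw [mul_assoc, hff]
  rw [hx] at h
  exact h

def cornerCommRing {A : Type u} [Ring A] {f : A} (hff : f * f = f)
    (hab : ∀ a b : A, (f * a * f) * (f * b * f) = (f * b * f) * (f * a * f)) :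
    CommRing {x : A // f * x * f = x} where
  add x y := ⟨x.1 + y.1, by rw [mul_add, add_mul, x.2, y.2]⟩
  zero := ⟨0, by simp⟩
  neg x := ⟨-x.1, by simp only [mul_neg, neg_mul, x.2]⟩
  mul x y := ⟨x.1 * y.1, by
    have h : f * (x.1 * y.1) * f = x.1 * (y.1 * f) := by
      rw [← mul_assoc, corner_mul_left hff x.2, mul_assoc]
    rw [h, corner_mul_right hff y.2]⟩
  one := ⟨f, by rw [hff, hff]⟩
  nsmul k x := ⟨k • x.1, by rw [mul_smul_comm, smul_mul_assoc, x.2]⟩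
  nsmul_zero x := Subtype.ext (zero_smul ℕ x.1)
  nsmul_succ k x := Subtype.ext (succ_nsmul x.1 k)
  zsmul k x := ⟨k • x.1, by rw [mul_smul_comm, smul_mul_assoc, x.2]⟩
  zsmul_zero' x := Subtype.ext (zero_smul ℤ x.1)
  zsmul_succ' k x := Subtype.ext (by
    show (Int.ofNat k.succ) • x.1 = (Int.ofNat k) • x.1 + x.1
    rw [show (Int.ofNat k.succ) = Int.ofNat k + 1 from rfl, add_smul, one_smul])
  zsmul_neg' k x := Subtype.ext (by
    show (Int.negSucc k) • x.1 = -((Int.ofNat k.succ) • x.1)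
    rw [show (Int.negSucc k) = -(Int.ofNat k.succ) from rfl, neg_smul])
  add_assoc x y z := Subtype.ext (add_assoc x.1 y.1 z.1)
  zero_add x := Subtype.ext (zero_add x.1)
  add_zero x := Subtype.ext (add_zero x.1)
  add_comm x y := Subtype.ext (add_comm x.1 y.1)
  neg_add_cancel x := Subtype.ext (neg_add_cancel x.1)
  mul_assoc x y z := Subtype.ext (mul_assoc x.1 y.1 z.1)
  one_mul x := Subtype.ext (corner_mul_left hff x.2)
  mul_one x := Subtype.ext (corner_mul_right hff x.2)
  left_distrib x y z := Subtype.ext (left_distrib x.1 y.1 z.1)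
  right_distrib x y z := Subtype.ext (right_distrib x.1 y.1 z.1)
  zero_mul x := Subtype.ext (zero_mul x.1)
  mul_zero x := Subtype.ext (mul_zero x.1)
  mul_comm x y := by
    have h := hab x.1 y.1
    rw [x.2, y.2] at h
    exact Subtype.ext h

lemma trace_idem_nat {K : Type*} [Field K] {m : ℕ}
    (E : Matrix (Fin m) (Fin m) K) (hE : E * E = E) :
    ∃ r : ℕ, Matrix.trace E = (r : K) := by
  have hg : Matrix.toLin' E ∘ₗ Matrix.toLin' E = Matrix.toLin' E := by
    rw [← Matrix.toLin'_mul, hE]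
  obtain ⟨p, hp⟩ := (LinearMap.isProj_iff_isIdempotentElem (Matrix.toLin' E)).mpr hg
  refine ⟨Module.finrank K p, ?_⟩
  have ht := hp.trace
  rw [LinearMap.trace_eq_matrix_trace K (Pi.basisFun K (Fin m)),
      LinearMap.toMatrix_eq_toMatrix', LinearMap.toMatrix'_toLin'] at ht
  exact ht

/-- In a nonzero AW*-algebra of type I_m, if `1` is a sum of `n` pairwise
orthogonal, pairwise equivalent projections, then `n` divides `m`. -/
theorem typeIm_divisibility {A : Type u} [NormedRing A] [StarRing A] [CStarRing A]
    [NormedAlgebra ℂ A] [StarModule ℂ A] [CompleteSpace A]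
    (hAW : IsAWStarRing A) (hA : (1 : A) ≠ 0)
    (m n : ℕ) (hm : 0 < m) (hn : 0 < n)
    (hIm : ∃ f : Fin m → A, (∀ i, IsAbelianProj (f i)) ∧ PairwiseOrthogonal f ∧
      (∀ i j, ProjEquiv (f i) (f j)) ∧ ∑ i, f i = 1)
    (e : Fin n → A) (hproj : ∀ i, IsProjection (e i)) (horth : PairwiseOrthogonal e)
    (hequiv : ∀ i j, ProjEquiv (e i) (e j)) (hsum : ∑ i, e i = 1) :
    n ∣ m := by
  classical
  obtain ⟨fam, hfab, hforth, hfequiv, hfsum⟩ := hIm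
  have i0 : Fin m := ⟨0, hm⟩
  have j0 : Fin n := ⟨0, hn⟩
  set f : A := fam i0 with hfdef
  have hff : f * f = f := (hfab i0).1.2
  have hsf : star f = f := (hfab i0).1.1
  have hab : ∀ a b : A, (f * a * f) * (f * b * f) = (f * b * f) * (f * a * f) := (hfab i0).2
  -- choose partial isometries implementing the equivalences f₀ ∼ fᵢ
  have hch : ∀ i, ∃ w : A, star w * w = f ∧ w * star w = fam i := fun i => hfequiv i0 i
  choose v hvv hvf using hch
  have hvf2 : ∀ i, v i * f = v i := fun i => aux_pisom (v i) f hsf (hvv i) hff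
  have hfv : ∀ i, f * star (v i) = star (v i) := by
    intro i
    calc f * star (v i) = star f * star (v i) := by rw [hsf]
      _ = star (v i * f) := (star_mul _ _).symm
      _ = star (v i) := by rw [hvf2]
  have hs1 : (∑ i, v i * star (v i)) = (1 : A) := by
    calc (∑ i, v i * star (v i)) = ∑ i, fam i := Finset.sum_congr rfl fun i _ => hvf i
      _ = 1 := hfsum
  -- corner membership of the "matrix entries"
  have memB : ∀ (a : A) (i k : Fin m), f * (star (v i) * a * v k) * f = star (v i) * a * v k := by
    intro a i k
    have h : f * (star (v i) * a * v k) * f = (f * star (v i)) * (a * (v k * f)) := by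
      simp only [mul_assoc]
    rw [h, hfv, hvf2, ← mul_assoc]
  -- the core expansion identity
  have core : ∀ (a b : A) (i j : Fin m),
      (∑ k, (star (v i) * a * v k) * (star (v k) * b * v j)) = star (v i) * (a * b) * v j := by
    intro a b i j
    have h2 : star (v i) * (a * b) * v j
        = ∑ k, (star (v i) * a * v k) * (star (v k) * b * v j) := by
      conv_lhs => rw [show a * b = a * ((∑ k, v k * star (v k)) * b) by rw [hs1, one_mul]]
      simp only [Finset.mul_sum, Finset.sum_mul]
      exact Finset.sum_congr rfl fun k _ => by simp only [mul_assoc]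
    exact h2.symm
  -- the trace property
  have key : ∀ a b : A, (∑ i, star (v i) * (a * b) * v i) = ∑ i, star (v i) * (b * a) * v i := by
    intro a b
    calc (∑ i, star (v i) * (a * b) * v i)
        = ∑ i, ∑ k, (star (v i) * a * v k) * (star (v k) * b * v i) :=
          Finset.sum_congr rfl fun i _ => (core a b i i).symm
      _ = ∑ k, ∑ i, (star (v i) * a * v k) * (star (v k) * b * v i) := Finset.sum_comm
      _ = ∑ k, ∑ i, (star (v k) * b * v i) * (star (v i) * a * v k) := by
          refine Finset.sum_congr rfl fun k _ => Finset.sum_congr rfl fun i _ => ?_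
          have h := hab (star (v i) * a * v k) (star (v k) * b * v i)
          rw [memB a i k, memB b k i] at h
          exact h
      _ = ∑ k, star (v k) * (b * a) * v k := Finset.sum_congr rfl fun k _ => core b a k k
  have hT1 : (∑ i, star (v i) * (1 : A) * v i) = m • f := by
    simp only [mul_one, hvv]
    simp [Finset.card_univ]
  set c : A := ∑ i, star (v i) * (e j0) * v i with hc
  have hTe : ∀ j, (∑ i, star (v i) * (e j) * v i) = c := by
    intro j
    obtain ⟨w, hw1, hw2⟩ := hequiv j0 j
    calc (∑ i, star (v i) * (e j) * v i)
        = ∑ i, star (v i) * (w * star w) * v i := by rw [hw2]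
      _ = ∑ i, star (v i) * (star w * w) * v i := key w (star w)
      _ = c := by rw [hw1]
  have hnc : n • c = m • f := by
    have h3 : ∀ i, (∑ j, star (v i) * (e j) * v i) = star (v i) * (1 : A) * v i := by
      intro i
      rw [← hsum]
      simp only [Finset.mul_sum, Finset.sum_mul]
    calc n • c = ∑ _j : Fin n, c := by
          rw [Finset.sum_const, Finset.card_univ, Fintype.card_fin]
      _ = ∑ j : Fin n, ∑ i, star (v i) * (e j) * v i :=
          Finset.sum_congr rfl fun j _ => (hTe j).symm
      _ = ∑ i, ∑ j : Fin n, star (v i) * (e j) * v i := Finset.sum_comm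
      _ = ∑ i, star (v i) * (1 : A) * v i := Finset.sum_congr rfl fun i _ => h3 i
      _ = m • f := hT1
  have hfne : f ≠ 0 := by
    intro h0
    have hv0 : ∀ i, v i = 0 := by
      intro i
      have hz := hvv i
      rw [h0] at hz
      exact (CStarRing.star_mul_self_eq_zero_iff _).mp hz
    refine hA ?_
    rw [← hfsum]
    exact (Finset.sum_eq_zero fun i _ => by rw [← hvf i, hv0 i, zero_mul])
  -- the commutative corner ring
  letI instB : CommRing {x : A // f * x * f = x} := cornerCommRing hff hab
  let ι : {x : A // f * x * f = x} →+ A :=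
    { toFun := Subtype.val, map_zero' := rfl, map_add' := fun _ _ => rfl }
  let E : Matrix (Fin m) (Fin m) {x : A // f * x * f = x} :=
    Matrix.of fun i j => ⟨star (v i) * (e j0) * v j, memB (e j0) i j⟩
  have hE : E * E = E := by
    ext i j
    show ((E * E) i j : A) = (E i j : A)
    have h : ((E * E) i j : A) = ∑ k, (star (v i) * (e j0) * v k) * (star (v k) * (e j0) * v j) := by
      rw [Matrix.mul_apply]
      exact map_sum ι _ _
    rw [h, core (e j0) (e j0) i j, (hproj j0).2]
    rfl
  have htr : ι (Matrix.trace E) = c := by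
    show (ι (∑ i, E i i) : A) = c
    rw [map_sum ι]
    rfl
  have htrB : n • Matrix.trace E = m • (1 : {x : A // f * x * f = x}) := by
    apply Subtype.ext
    show ι (n • Matrix.trace E) = (ι (m • 1) : A)
    rw [map_nsmul, map_nsmul, htr]
    have hι1 : (ι (1 : {x : A // f * x * f = x}) : A) = f := rfl
    rw [hι1]
    exact hnc
  haveI : Nontrivial {x : A // f * x * f = x} :=
    ⟨⟨0, 1, fun h => hfne (congrArg Subtype.val h).symm⟩⟩
  obtain ⟨I, hI⟩ := Ideal.exists_maximal {x : A // f * x * f = x}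
  haveI := hI
  letI : Field ({x : A // f * x * f = x} ⧸ I) := Ideal.Quotient.field I
  let χ : {x : A // f * x * f = x} →+* ({x : A // f * x * f = x} ⧸ I) := Ideal.Quotient.mk I
  let φ : ℚ →+* {x : A // f * x * f = x} :=
    { toFun := fun q => ⟨(q : ℂ) • f, by
        rw [mul_smul_comm, smul_mul_assoc, hff, hff]⟩
      map_one' := Subtype.ext (by
        show ((1 : ℚ) : ℂ) • f = f
        rw [Rat.cast_one, one_smul])
      map_mul' := fun q q' => Subtype.ext (by
        show ((q * q' : ℚ) : ℂ) • f = ((q : ℂ) • f) * ((q' : ℂ) • f)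
        rw [smul_mul_assoc, mul_smul_comm, smul_smul, hff, Rat.cast_mul])
      map_zero' := Subtype.ext (by
        show ((0 : ℚ) : ℂ) • f = 0
        rw [Rat.cast_zero, zero_smul])
      map_add' := fun q q' => Subtype.ext (by
        show ((q + q' : ℚ) : ℂ) • f = (q : ℂ) • f + (q' : ℂ) • f
        rw [Rat.cast_add, add_smul]) }
  let ψ : ℚ →+* ({x : A // f * x * f = x} ⧸ I) := χ.comp φ
  have hψ : Function.Injective ψ := ψ.injective
  have hEK : χ.mapMatrix E * χ.mapMatrix E = χ.mapMatrix E := by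
    rw [← map_mul, hE]
  obtain ⟨r, hr⟩ := trace_idem_nat (χ.mapMatrix E) hEK
  have htrK : Matrix.trace (χ.mapMatrix E) = χ (Matrix.trace E) := by
    show (∑ i, χ (E i i)) = χ (∑ i, E i i)
    exact (map_sum χ _ _).symm
  have hfin : ((n * r : ℕ) : ({x : A // f * x * f = x} ⧸ I)) = ((m : ℕ) : _) := by
    have h1 := congrArg χ htrB
    rw [map_nsmul, map_nsmul, map_one, ← htrK, hr] at h1
    rw [nsmul_eq_mul, nsmul_eq_mul, mul_one] at h1
    push_cast
    exact h1
  have h2 : ψ ((n * r : ℕ) : ℚ) = ψ ((m : ℕ) : ℚ) := by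
    rw [map_natCast, map_natCast]
    exact hfin
  have hnm : n * r = m := by exact_mod_cast hψ h2
  exact ⟨r, hnm.symm⟩
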